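/- Let n ∈ ℕ, r ≥ p−1, and let m_0 be a Walsh polynomial of order p^n − 1 satisfying condition (*), with polyphase components μ_{0,s}, and set b^{(0,s)}_{n,l} := μ_{0,s}(A^{1−n}(h_[l])) for s = 0,…,p−1 and l = 0,…,p^n−1. Then: (i) Σ_{s=0}^{p−1} |b^{(0,s)}_{n,l}|² ≤ 1 for every l = 0,…,p^n−1. (ii) Walsh polynomials m_1,…,m_r of order p^n − 1 satisfy M(ω)M*(ω) = I_p for all ω ∈ G if and only if their polyphase components are given by μ_{ν,s}(Aω) = Σ_{l=0}^{p^n−1} b^{(ν,s)}_{n,l} 1_{U_{n,l}}(ω) for ω ∈ U and s = 0,…,p−1, where the complex numbers b^{(ν,s)}_{n,l} (ν = 1,…,r) together with the b^{(0,s)}_{n,l} satisfy Σ_{ν=0}^{r} b^{(ν,s)}_{n,l} conj(b^{(ν,s')}_{n,l}) = δ_{s,s'} for all s, s' ∈ {0,…,p−1} and all l = 0,…,p^n−1. -/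

import Mathlib

open MeasureTheory Filter Topology Matrix

noncomputable section

namespace Vilenkin

/-- The underlying additive subgroup of `ℤ → ZMod p` consisting of sequences that
vanish for all sufficiently small indices. -/
def VilSub (p : ℕ) : AddSubgroup (ℤ → ZMod p) where
  carrier := {x | ∃ k : ℤ, ∀ j < k, x j = 0}
  zero_mem' := ⟨0, fun _ _ => rfl⟩
  add_mem' := by
    rintro a b ⟨ka, hka⟩ ⟨kb, hkb⟩
    refine ⟨min ka kb, fun j hj => ?_⟩
    have h1 := hka j (lt_of_lt_of_le hj (min_le_left _ _))
    have h2 := hkb j (lt_of_lt_of_le hj (min_le_right _ _))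
    show a j + b j = 0
    rw [h1, h2, add_zero]
  neg_mem' := by
    rintro a ⟨ka, hka⟩
    refine ⟨ka, fun j hj => ?_⟩
    show -a j = 0
    rw [hka j hj, neg_zero]

/-- The Vilenkin group `G = G_p`. -/
abbrev Vil (p : ℕ) := {x : ℤ → ZMod p // x ∈ VilSub p}

/-- The (iterated) shift automorphism: `Ash p t x` is `A^t x`, with `(A x)_j = x_{j+1}`. -/
def Ash (p : ℕ) (t : ℤ) (x : Vil p) : Vil p :=
  ⟨fun j => x.1 (j + t), by
    obtain ⟨k, hk⟩ := x.2
    exact ⟨k - t, fun j hj => hk (j + t) (by omega)⟩⟩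

/-- `λ(x) = Σ_j x_j p^{-j}`. -/
def lam (p : ℕ) (x : Vil p) : ℝ := ∑' j : ℤ, ((x.1 j).val : ℝ) * (p : ℝ) ^ (-j)

/-- `λ` restricted to `H` with values in `ℕ`:  `Σ_{i ≥ 0} x_{-i} p^i`. -/
def lamNat (p : ℕ) (x : Vil p) : ℕ := ∑' i : ℕ, (x.1 (-(i : ℤ))).val * p ^ i

/-- The element `h_[α]` of `H` with `λ(h_[α]) = α` (base-`p` digits of `α`). -/
def hElt (p : ℕ) (α : ℕ) : Vil p :=
  ⟨fun j => if j ≤ 0 then ((α / p ^ (-j).toNat : ℕ) : ZMod p) else 0, by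
    refine ⟨-(α : ℤ), fun j hj => ?_⟩
    have hj0 : j ≤ 0 := by omega
    show (if j ≤ 0 then ((α / p ^ (-j).toNat : ℕ) : ZMod p) else 0) = 0
    rw [if_pos hj0]
    rcases Nat.lt_or_ge p 2 with hp | hp
    · interval_cases p
      · have hn : (-j).toNat ≠ 0 := by omega
        simp [zero_pow hn]
      · exact Subsingleton.elim _ _
    · have hn : α < (-j).toNat := by omega
      have h2 : α < 2 ^ (-j).toNat := lt_trans hn (by first | exact Nat.lt_two_pow_self | exact Nat.lt_two_pow_self _)
      have hpow : α < p ^ (-j).toNat :=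
        lt_of_lt_of_le h2 (Nat.pow_le_pow_left hp _)
      rw [Nat.div_eq_of_lt hpow]
      simp⟩

/-- The character `χ(x, ω) = exp((2πi/p) Σ_j x_j ω_{1-j})`. -/
def chi (p : ℕ) (x ω : Vil p) : ℂ :=
  Complex.exp ((2 * Real.pi * Complex.I / p) *
    ∑' j : ℤ, (((x.1 j).val : ℂ) * ((ω.1 (1 - j)).val : ℂ)))

/-- The generalized Walsh function `W_α(x) = χ(x, h_[α])`. -/
def Walsh (p : ℕ) (α : ℕ) (x : Vil p) : ℂ := chi p x (hElt p α)

/-- The element `δ_l` of `G` with `λ(δ_l) = l / p`. -/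
def deltaElt (p : ℕ) (l : ℕ) : Vil p :=
  ⟨fun j => if j = 1 then (l : ZMod p) else 0, ⟨1, fun j hj => if_neg (by omega)⟩⟩

/-- `U_l = {x : x_j = 0 for j ≤ l}`. -/
def Uball (p : ℕ) (l : ℤ) : Set (Vil p) := {x | ∀ j ≤ l, x.1 j = 0}

/-- `U = U_0`. -/
def Uset (p : ℕ) : Set (Vil p) := Uball p 0

/-- `H = {x : x_j = 0 for j > 0}`. -/
def Hset (p : ℕ) : Set (Vil p) := {x | ∀ j : ℤ, 0 < j → x.1 j = 0}

/-- The non-Archimedean norm `‖x‖ = p^{-k(x)}`, `‖θ‖ = 0`. -/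
def vnorm (p : ℕ) (x : Vil p) : ℝ := ⨆ j : ℤ, (if x.1 j ≠ 0 then (p : ℝ) ^ (-j) else 0)

/-- The Vilenkin topology, generated by the cosets of the subgroups `U_l`. -/
instance (p : ℕ) : TopologicalSpace (Vil p) :=
  TopologicalSpace.generateFrom
    {S | ∃ (x : Vil p) (l : ℤ), S = {y : Vil p | ∀ j ≤ l, y.1 j = x.1 j}}

instance (p : ℕ) : MeasurableSpace (Vil p) := borel (Vil p)

/-- `μ` is the Haar measure on `G`: translation invariant and normalized by `μ(U) = 1`. -/
def IsHaar (p : ℕ) (μ : Measure (Vil p)) : Prop :=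
  (∀ (a : Vil p) (s : Set (Vil p)), μ ((fun x => a + x) ⁻¹' s) = μ s) ∧ μ (Uset p) = 1

/-- The Fourier transform (integral form) `f̂(ω) = ∫ f(x) conj χ(x,ω) dμ(x)`. -/
def FT (p : ℕ) (μ : Measure (Vil p)) (f : Vil p → ℂ) (ω : Vil p) : ℂ :=
  ∫ x, f x * (starRingEnd ℂ) (chi p x ω) ∂μ

/-- The `L²` inner product `⟨f, g⟩ = ∫ f conj g dμ`. -/
def ip (p : ℕ) (μ : Measure (Vil p)) (f g : Vil p → ℂ) : ℂ :=
  ∫ x, f x * (starRingEnd ℂ) (g x) ∂μ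

/-- The dilated-translated system `ψ_{j,k}(x) = p^{j/2} ψ(A^j x ⊖ h_[k])`. -/
def wsys (p : ℕ) (ψ : Vil p → ℂ) (j : ℤ) (k : ℕ) (x : Vil p) : ℂ :=
  ((Real.sqrt p ^ j : ℝ) : ℂ) * ψ (Ash p j x - hElt p k)

/-- `m` is the Walsh polynomial of order `p^n - 1` with coefficients `a`. -/
def IsWalshPolyOfOrder (p n : ℕ) (a : ℕ → ℂ) (m : Vil p → ℂ) : Prop :=
  ∀ ω, m ω = ∑ α ∈ Finset.range (p ^ n), a α * (starRingEnd ℂ) (Walsh p α ω)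

/-- `m` is a Walsh polynomial. -/
def IsWalshPoly (p : ℕ) (m : Vil p → ℂ) : Prop :=
  ∃ n a, IsWalshPolyOfOrder p n a m

/-- The polyphase component `μ_{ν,s}(ω) = √p Σ_{α < p^{n-1}} a_{pα+s} conj W_α(ω)`. -/
def polyphase (p n : ℕ) (a : ℕ → ℂ) (s : ℕ) (ω : Vil p) : ℂ :=
  (Real.sqrt p : ℂ) *
    ∑ α ∈ Finset.range (p ^ (n - 1)), a (p * α + s) * (starRingEnd ℂ) (Walsh p α ω)

/-- The matrix `M(ω)` with entries `M(ω)_{l,ν} = m_ν(ω ⊕ δ_l)`. -/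
def MaskMatrix (p r : ℕ) (m : Fin (r + 1) → Vil p → ℂ) (ω : Vil p) :
    Matrix (Fin p) (Fin (r + 1)) ℂ :=
  Matrix.of fun l ν => m ν (ω + deltaElt p (l : ℕ))

/-- The unitary extension condition `M(ω) M(ω)* = I_p` for all `ω`. -/
def UEP (p r : ℕ) (m : Fin (r + 1) → Vil p → ℂ) : Prop :=
  ∀ ω : Vil p, MaskMatrix p r m ω * (MaskMatrix p r m ω)ᴴ = 1

/-- Condition (*): `Σ_{l<p} |m_0(ω ⊕ δ_l)|² ≤ 1` for all `ω`. -/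
def StarCond (p : ℕ) (m0 : Vil p → ℂ) : Prop :=
  ∀ ω : Vil p, ∑ l ∈ Finset.range p, ‖m0 (ω + deltaElt p l)‖ ^ 2 ≤ 1

/-- `φ` satisfies the refinement equation with coefficients `a` (of length `p^n`). -/
def RefinableWithMask (p n : ℕ) (a : ℕ → ℂ) (φ : Vil p → ℂ) : Prop :=
  ∀ x, φ x = p * ∑ α ∈ Finset.range (p ^ n), a α * φ (Ash p 1 x - hElt p α)

/-- The coset `U_{n,l} = A^{-n}(h_[l]) ⊕ A^{-n}(U)`. -/
def Unl (p : ℕ) (n l : ℕ) : Set (Vil p) :=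
  (fun u => Ash p (-(n : ℤ)) (hElt p l) + Ash p (-(n : ℤ)) u) '' Uset p

/-- Membership in the Sobolev space `W₂^m`, phrased in terms of (a representative of)
the Fourier transform `fhat` of `f`. -/
def MemW2 (p : ℕ) (μ : Measure (Vil p)) (m : ℕ) (fhat : Vil p → ℂ) : Prop :=
  ∀ k ≤ m, Integrable (fun ω => vnorm p ω ^ (2 * k) * ‖fhat ω‖ ^ 2) μ

/-- The Sobolev norm `‖f‖_{2,m}`, phrased via the Fourier transform `fhat` of `f`. -/
def sobNorm (p : ℕ) (μ : Measure (Vil p)) (m : ℕ) (fhat : Vil p → ℂ) : ℝ :=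
  ∑ k ∈ Finset.range (m + 1), Real.sqrt (∫ ω, vnorm p ω ^ (2 * k) * ‖fhat ω‖ ^ 2 ∂μ)

end Vilenkin
namespace Vilenkin

section Aux

variable {p : ℕ}

/-- The constant `2πi/p`. -/
noncomputable def cst (p : ℕ) : ℂ := 2 * Real.pi * Complex.I / p

lemma vil_add_apply (x y : Vil p) (j : ℤ) : (x + y).1 j = x.1 j + y.1 j := rfl

lemma Ash_apply (t : ℤ) (x : Vil p) (j : ℤ) : (Ash p t x).1 j = x.1 (j + t) := rfl

lemma Ash_Ash (t u : ℤ) (x : Vil p) : Ash p t (Ash p u x) = Ash p (t + u) x := by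
  apply Subtype.ext; funext j; show x.1 (j + t + u) = x.1 (j + (t + u)); ring_nf

lemma hElt_apply_le (α : ℕ) {j : ℤ} (hj : j ≤ 0) :
    (hElt p α).1 j = ((α / p ^ (-j).toNat : ℕ) : ZMod p) := if_pos hj

lemma hElt_apply_pos (α : ℕ) {j : ℤ} (hj : 0 < j) : (hElt p α).1 j = 0 :=
  if_neg (by omega)

lemma exp_cst_natCast_eq (hp : 2 ≤ p) {a b : ℕ} (h : (a : ZMod p) = (b : ZMod p)) :
    Complex.exp (cst p * a) = Complex.exp (cst p * b) := by
  have hmod : a ≡ b [MOD p] := (ZMod.natCast_eq_natCast_iff a b p).mp h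
  obtain ⟨k, hk⟩ := hmod.dvd
  have hp0 : (p : ℂ) ≠ 0 := by
    exact_mod_cast Nat.cast_ne_zero.mpr (by omega)
  have : cst p * b = cst p * a + k * (2 * Real.pi * Complex.I) := by
    have hb : (b : ℂ) = (a : ℂ) + (p : ℂ) * k := by
      have : (b : ℤ) = (a : ℤ) + p * k := by omega
      exact_mod_cast congrArg (fun z : ℤ => (z : ℂ)) this
    rw [hb]
    unfold cst
    field_simp
  rw [this, Complex.exp_add, Complex.exp_int_mul_two_pi_mul_I, mul_one]

lemma zmod_val_natCast (hp : 2 ≤ p) (t : ZMod p) : ((t.val : ℕ) : ZMod p) = t := by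
  haveI : NeZero p := ⟨by omega⟩
  exact ZMod.natCast_rightInverse t

end Aux
section Aux2

variable {p : ℕ}

/-- The natural number `Σ_{j=1}^n x_j.val * (h_[α])_{1-j}.val`. -/
def wsum (p n α : ℕ) (x : Vil p) : ℕ :=
  ∑ j ∈ Finset.Icc (1:ℤ) (n:ℤ), (x.1 j).val * ((hElt p α).1 (1 - j)).val

lemma hElt_val_zero (hp : 2 ≤ p) {n α : ℕ} (hα : α < p ^ n) {j : ℤ}
    (hj : j ∉ Finset.Icc (1:ℤ) (n:ℤ)) : ((hElt p α).1 (1 - j)) = 0 := by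
  rw [Finset.mem_Icc] at hj
  push_neg at hj
  rcases lt_or_ge j 1 with h1 | h1
  · exact hElt_apply_pos α (by omega)
  · have hjn : (n : ℤ) < j := hj h1
    rw [hElt_apply_le α (by omega)]
    have ht : n ≤ (-(1 - j)).toNat := by omega
    have : α < p ^ (-(1 - j)).toNat :=
      lt_of_lt_of_le hα (Nat.pow_le_pow_right (by omega) ht)
    rw [Nat.div_eq_of_lt this, Nat.cast_zero]

lemma chi_hElt (hp : 2 ≤ p) {n α : ℕ} (hα : α < p ^ n) (x : Vil p) :
    chi p x (hElt p α) = Complex.exp (cst p * (wsum p n α x : ℕ)) := by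
  unfold chi
  have hts : (∑' j : ℤ, (((x.1 j).val : ℂ) * (((hElt p α).1 (1 - j)).val : ℂ)))
      = ∑ j ∈ Finset.Icc (1:ℤ) (n:ℤ),
          (((x.1 j).val : ℂ) * (((hElt p α).1 (1 - j)).val : ℂ)) := by
    apply tsum_eq_sum
    intro j hj
    rw [hElt_val_zero hp hα hj]
    simp
  rw [hts]
  congr 1
  · rw [wsum]
    push_cast
    rfl
  
lemma Walsh_eq_exp (hp : 2 ≤ p) {n α : ℕ} (hα : α < p ^ n) (x : Vil p) :
    Walsh p α x = Complex.exp (cst p * (wsum p n α x : ℕ)) := chi_hElt hp hα x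

/-- Locality: a Walsh function of order `< p^n` only depends on coordinates `1..n`. -/
lemma Walsh_local (hp : 2 ≤ p) {n α : ℕ} (hα : α < p ^ n) {x y : Vil p}
    (h : ∀ j ∈ Finset.Icc (1:ℤ) (n:ℤ), x.1 j = y.1 j) : Walsh p α x = Walsh p α y := by
  rw [Walsh_eq_exp hp hα, Walsh_eq_exp hp hα]
  have : wsum p n α x = wsum p n α y :=
    Finset.sum_congr rfl fun j hj => by rw [h j hj]
  rw [this]

/-- Multiplicativity of Walsh functions. -/
lemma Walsh_add (hp : 2 ≤ p) {n α : ℕ} (hα : α < p ^ n) (x y : Vil p) :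
    Walsh p α (x + y) = Walsh p α x * Walsh p α y := by
  rw [Walsh_eq_exp hp hα, Walsh_eq_exp hp hα, Walsh_eq_exp hp hα, ← Complex.exp_add,
    ← mul_add, ← Nat.cast_add]
  apply exp_cst_natCast_eq hp
  rw [wsum, wsum, wsum, Nat.cast_sum, ← Finset.sum_add_distrib, Nat.cast_sum]
  apply Finset.sum_congr rfl
  intro j _
  push_cast
  rw [zmod_val_natCast hp, zmod_val_natCast hp, zmod_val_natCast hp, zmod_val_natCast hp,
    Pi.add_apply, add_mul]

end Aux2
section Aux3

variable {p : ℕ}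

lemma div_pow_succ (hp : 2 ≤ p) {s : ℕ} (hs : s < p) (β i : ℕ) :
    (p * β + s) / p ^ (i + 1) = β / p ^ i := by
  rw [pow_succ', ← Nat.div_div_eq_div_mul, Nat.mul_add_div (by omega),
    Nat.div_eq_of_lt hs, add_zero]

lemma pβs_lt (hp : 2 ≤ p) {n s β : ℕ} (hn : 1 ≤ n) (hs : s < p) (hβ : β < p ^ (n - 1)) :
    p * β + s < p ^ n := by
  have h1 : p * (β + 1) ≤ p * p ^ (n - 1) := Nat.mul_le_mul_left p hβ
  have h2 : p * p ^ (n - 1) = p ^ n := by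
    rw [← pow_succ']
    congr 1
    omega
  have h3 : p * (β + 1) = p * β + p := by ring
  omega

lemma Walsh_p_mul (hp : 2 ≤ p) {n s β : ℕ} (hn : 1 ≤ n) (hs : s < p)
    (hβ : β < p ^ (n - 1)) (x : Vil p) :
    Walsh p (p * β + s) x
      = Complex.exp (cst p * (((x.1 1).val * s : ℕ) : ℂ)) * Walsh p β (Ash p 1 x) := by
  haveI : NeZero p := ⟨by omega⟩
  have hβn : p * β + s < p ^ n := pβs_lt hp hn hs hβ
  rw [Walsh_eq_exp hp hβn, Walsh_eq_exp hp hβ (Ash p 1 x), ← Complex.exp_add, ← mul_add,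
    ← Nat.cast_add]
  have key : wsum p n (p * β + s) x = (x.1 1).val * s + wsum p (n - 1) β (Ash p 1 x) := by
    unfold wsum
    have hins : Finset.Icc (1:ℤ) (n:ℤ) = insert (1:ℤ) (Finset.Icc 2 (n:ℤ)) := by
      ext j
      simp only [Finset.mem_Icc, Finset.mem_insert]
      omega
    rw [hins, Finset.sum_insert (by simp)]
    congr 1
    · -- the `j = 1` term
      have h0 : (1:ℤ) - 1 = 0 := by norm_num
      rw [h0, hElt_apply_le _ (le_refl 0)]
      congr 1
      have : (-(0:ℤ)).toNat = 0 := rfl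
      rw [this, pow_zero, Nat.div_one, ZMod.val_natCast, Nat.mul_add_mod,
        Nat.mod_eq_of_lt hs]
    · -- the sum over `2..n`
      refine Finset.sum_nbij' (fun j => j - 1) (fun j => j + 1) ?_ ?_ ?_ ?_ ?_
      · intro a ha
        rw [Finset.mem_Icc] at ha
        rw [Finset.mem_Icc]
        omega
      · intro a ha
        rw [Finset.mem_Icc] at ha
        rw [Finset.mem_Icc]
        omega
      · intro a _; ring
      · intro a _; ring
      · intro a ha
        rw [Finset.mem_Icc] at ha
        have hx : (Ash p 1 x).1 (a - 1) = x.1 a := by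
          rw [Ash_apply]; congr 1; ring
        rw [hx]
        congr 1
        rw [hElt_apply_le _ (by omega : (1:ℤ) - a ≤ 0),
          hElt_apply_le _ (by omega : (1:ℤ) - (a - 1) ≤ 0)]
        have h1 : (-((1:ℤ) - a)).toNat = (-((1:ℤ) - (a - 1))).toNat + 1 := by omega
        rw [h1, div_pow_succ hp hs]
  rw [key]

end Aux3
section Aux4

variable {p : ℕ}

lemma polyphase_local (hp : 2 ≤ p) {n : ℕ} (a : ℕ → ℂ) (s : ℕ) {x y : Vil p}
    (h : ∀ j ∈ Finset.Icc (1:ℤ) ((n - 1 : ℕ) : ℤ), x.1 j = y.1 j) :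
    polyphase p n a s x = polyphase p n a s y := by
  unfold polyphase
  congr 1
  refine Finset.sum_congr rfl fun β hβ => ?_
  rw [Finset.mem_range] at hβ
  rw [Walsh_local hp hβ h]

lemma sqrtp_ne_zero (hp : 2 ≤ p) : (Real.sqrt p : ℂ) ≠ 0 := by
  have : (0:ℝ) < Real.sqrt p := Real.sqrt_pos.mpr (by positivity)
  exact_mod_cast ne_of_gt this

/-- The polyphase decomposition of a Walsh polynomial. -/
lemma mask_formula (hp : 2 ≤ p) {n : ℕ} (hn : 1 ≤ n) {a : ℕ → ℂ} {m : Vil p → ℂ}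
    (hm : IsWalshPolyOfOrder p n a m) (x : Vil p) :
    m x = (Real.sqrt p : ℂ)⁻¹ * ∑ s ∈ Finset.range p,
      (starRingEnd ℂ) (Complex.exp (cst p * (((x.1 1).val * s : ℕ) : ℂ)))
        * polyphase p n a s (Ash p 1 x) := by
  have hq : p ^ n = p * p ^ (n - 1) := by
    rw [← pow_succ']
    congr 1
    omega
  rw [hm x]
  have step1 : ∑ α ∈ Finset.range (p ^ n), a α * (starRingEnd ℂ) (Walsh p α x)
      = ∑ c ∈ (Finset.range p) ×ˢ (Finset.range (p ^ (n - 1))),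
          a (p * c.2 + c.1) * (starRingEnd ℂ) (Walsh p (p * c.2 + c.1) x) := by
    refine Finset.sum_nbij' (fun α => (α % p, α / p)) (fun c => p * c.2 + c.1)
      ?_ ?_ ?_ ?_ ?_
    · intro α hα
      rw [Finset.mem_range] at hα
      rw [Finset.mem_product]
      constructor
      · rw [Finset.mem_range]; exact Nat.mod_lt _ (by omega)
      · rw [Finset.mem_range]; exact Nat.div_lt_of_lt_mul (by omega)
    · intro c hc
      rw [Finset.mem_product, Finset.mem_range, Finset.mem_range] at hc
      rw [Finset.mem_range]
      exact pβs_lt hp hn hc.1 hc.2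
    · intro α _
      dsimp only
      rw [Nat.div_add_mod]
    · intro c hc
      rw [Finset.mem_product, Finset.mem_range, Finset.mem_range] at hc
      rw [Nat.mul_add_mod, Nat.mod_eq_of_lt hc.1, Nat.mul_add_div (by omega),
        Nat.div_eq_of_lt hc.1, add_zero]
    · intro α _
      dsimp only
      rw [Nat.div_add_mod]
  rw [step1, Finset.sum_product, Finset.mul_sum]
  refine Finset.sum_congr rfl fun s hs => ?_
  rw [Finset.mem_range] at hs
  have inner : ∑ β ∈ Finset.range (p ^ (n - 1)),
        a (p * β + s) * (starRingEnd ℂ) (Walsh p (p * β + s) x)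
      = (starRingEnd ℂ) (Complex.exp (cst p * (((x.1 1).val * s : ℕ) : ℂ)))
          * ∑ β ∈ Finset.range (p ^ (n - 1)),
              a (p * β + s) * (starRingEnd ℂ) (Walsh p β (Ash p 1 x)) := by
    rw [Finset.mul_sum]
    refine Finset.sum_congr rfl fun β hβ => ?_
    rw [Finset.mem_range] at hβ
    rw [Walsh_p_mul hp hn hs hβ x, _root_.map_mul]
    ring
  rw [inner]
  unfold polyphase
  have hsq := sqrtp_ne_zero hp
  field_simp

end Aux4
section Aux5

variable {p : ℕ}

lemma conj_cst : (starRingEnd ℂ) (cst p) = -cst p := by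
  simp only [cst, map_div₀, _root_.map_mul, Complex.conj_ofReal, Complex.conj_I,
    map_ofNat, map_natCast]
  ring

lemma cst_mul_p (hp : 2 ≤ p) : cst p * p = 2 * Real.pi * Complex.I := by
  have hp0 : (p : ℂ) ≠ 0 := by exact_mod_cast (by omega : p ≠ 0)
  unfold cst
  field_simp

lemma exp_cst_int_pow_p (hp : 2 ≤ p) (d : ℤ) :
    Complex.exp (cst p * d) ^ p = 1 := by
  rw [← Complex.exp_nat_mul]
  have : (p : ℂ) * (cst p * d) = (d : ℂ) * (2 * Real.pi * Complex.I) := by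
    rw [show (p:ℂ) * (cst p * d) = (d:ℂ) * (cst p * p) by ring, cst_mul_p hp]
  rw [this, Complex.exp_int_mul_two_pi_mul_I]

lemma exp_cst_int_ne_one (hp : 2 ≤ p) {d : ℤ} (hd : ¬ (p:ℤ) ∣ d) :
    Complex.exp (cst p * d) ≠ 1 := by
  intro h
  obtain ⟨k, hk⟩ := Complex.exp_eq_one_iff.mp h
  have hpi : (2 * Real.pi * Complex.I : ℂ) ≠ 0 := by
    simp [Real.pi_ne_zero, Complex.I_ne_zero]
  have h3 : (2 * Real.pi * Complex.I) * (d : ℂ)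
      = (2 * Real.pi * Complex.I) * ((k : ℂ) * p) := by
    calc (2 * Real.pi * Complex.I) * (d : ℂ) = (cst p * p) * d := by rw [cst_mul_p hp]
      _ = (cst p * d) * p := by ring
      _ = ((k : ℂ) * (2 * Real.pi * Complex.I)) * p := by rw [hk]
      _ = (2 * Real.pi * Complex.I) * ((k : ℂ) * p) := by ring
  have hdkp : (d : ℂ) = (k : ℂ) * p := mul_left_cancel₀ hpi h3
  have : d = k * p := by exact_mod_cast hdkp
  exact hd ⟨k, by rw [this]; ring⟩

/-- Orthogonality of the characters `s ↦ exp(cst * t.val * s)`. -/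
lemma exp_orth (hp : 2 ≤ p) (t u : ZMod p) :
    ∑ s ∈ Finset.range p,
        (starRingEnd ℂ) (Complex.exp (cst p * ((t.val * s : ℕ) : ℂ)))
          * Complex.exp (cst p * ((u.val * s : ℕ) : ℂ))
      = if t = u then (p : ℂ) else 0 := by
  haveI : NeZero p := ⟨by omega⟩
  set d : ℤ := (u.val : ℤ) - (t.val : ℤ) with hd
  have hterm : ∀ s ∈ Finset.range p,
      (starRingEnd ℂ) (Complex.exp (cst p * ((t.val * s : ℕ) : ℂ)))
          * Complex.exp (cst p * ((u.val * s : ℕ) : ℂ))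
        = Complex.exp (cst p * d) ^ s := by
    intro s _
    rw [← Complex.exp_conj, _root_.map_mul, conj_cst, ← Complex.exp_add,
      ← Complex.exp_nat_mul]
    congr 1
    rw [Complex.conj_natCast]
    push_cast [hd]
    ring
  rw [Finset.sum_congr rfl hterm]
  by_cases h : t = u
  · have hd0 : d = 0 := by rw [hd, h]; ring
    rw [hd0]
    simp [if_pos h]
  · rw [if_neg h]
    have hne : t.val ≠ u.val := fun hv => h (by
      have := congrArg (fun m : ℕ => (m : ZMod p)) hv
      simpa [ZMod.natCast_rightInverse t, ZMod.natCast_rightInverse u] using this)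
    have hdvd : ¬ (p:ℤ) ∣ d := by
      intro hdv
      have ht : t.val < p := t.val_lt
      have hu : u.val < p := u.val_lt
      have hd0 : d ≠ 0 := by omega
      have habs : (p:ℤ) ∣ |d| := (dvd_abs _ _).mpr hdv
      have hle : (p:ℤ) ≤ |d| := Int.le_of_dvd (abs_pos.mpr hd0) habs
      have hlt : |d| < p := abs_sub_lt_iff.mpr ⟨by omega, by omega⟩
      omega
    rw [geom_sum_eq (exp_cst_int_ne_one hp hdvd), exp_cst_int_pow_p hp, sub_self,
      zero_div]

end Aux5
section Aux6

variable {p : ℕ}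

lemma deltaElt_apply (l : ℕ) (j : ℤ) :
    (deltaElt p l).1 j = if j = 1 then (l : ZMod p) else 0 := rfl

/-- The unitary DFT-type factor of the mask matrix. -/
noncomputable def Fm (p : ℕ) (ω : Vil p) : Matrix (Fin p) (Fin p) ℂ :=
  Matrix.of fun l s => (Real.sqrt p : ℂ)⁻¹ *
    (starRingEnd ℂ) (Complex.exp (cst p *
      ((((ω.1 1 + ((l : ℕ) : ZMod p)).val * (s : ℕ) : ℕ)) : ℂ)))

/-- The polyphase matrix. -/
noncomputable def Pm (p n r : ℕ) (a : Fin (r + 1) → ℕ → ℂ) (ω : Vil p) :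
    Matrix (Fin p) (Fin (r + 1)) ℂ :=
  Matrix.of fun s ν => polyphase p n (a ν) (s : ℕ) (Ash p 1 ω)

lemma sqrt_mul_self_c (hp : 2 ≤ p) : (Real.sqrt p : ℂ) * (Real.sqrt p : ℂ) = (p : ℂ) := by
  rw [← Complex.ofReal_mul, Real.mul_self_sqrt (by positivity)]
  norm_cast

lemma Fm_unitary (hp : 2 ≤ p) (ω : Vil p) : Fm p ω * (Fm p ω)ᴴ = 1 := by
  haveI : NeZero p := ⟨by omega⟩
  ext l l'
  rw [Matrix.mul_apply, Matrix.one_apply]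
  simp only [Fm, Matrix.conjTranspose_apply, Matrix.of_apply, RCLike.star_def]
  have hterm : ∀ s : Fin p,
      (Real.sqrt p : ℂ)⁻¹ * (starRingEnd ℂ) (Complex.exp (cst p *
          ((((ω.1 1 + ((l : ℕ) : ZMod p)).val * (s : ℕ) : ℕ)) : ℂ)))
        * (starRingEnd ℂ) ((Real.sqrt p : ℂ)⁻¹ * (starRingEnd ℂ) (Complex.exp (cst p *
          ((((ω.1 1 + ((l' : ℕ) : ZMod p)).val * (s : ℕ) : ℕ)) : ℂ))))
      = ((p : ℂ))⁻¹ * ((starRingEnd ℂ) (Complex.exp (cst p *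
          ((((ω.1 1 + ((l : ℕ) : ZMod p)).val * (s : ℕ) : ℕ)) : ℂ)))
        * Complex.exp (cst p *
          ((((ω.1 1 + ((l' : ℕ) : ZMod p)).val * (s : ℕ) : ℕ)) : ℂ))) := by
    intro s
    rw [_root_.map_mul, Complex.conj_conj]
    have h1 : (starRingEnd ℂ) ((Real.sqrt p : ℂ)⁻¹) = (Real.sqrt p : ℂ)⁻¹ := by
      rw [map_inv₀, Complex.conj_ofReal]
    rw [h1, ← sqrt_mul_self_c hp, mul_inv]
    ring
  rw [Finset.sum_congr rfl (fun s _ => hterm s), ← Finset.mul_sum]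
  have hsum : ∑ s : Fin p,
      ((starRingEnd ℂ) (Complex.exp (cst p *
          ((((ω.1 1 + ((l : ℕ) : ZMod p)).val * (s : ℕ) : ℕ)) : ℂ)))
        * Complex.exp (cst p *
          ((((ω.1 1 + ((l' : ℕ) : ZMod p)).val * (s : ℕ) : ℕ)) : ℂ)))
      = if (ω.1 1 + ((l : ℕ) : ZMod p)) = (ω.1 1 + ((l' : ℕ) : ZMod p))
          then (p : ℂ) else 0 := by
    rw [Fin.sum_univ_eq_sum_range (fun s => (starRingEnd ℂ) (Complex.exp (cst p *
          ((((ω.1 1 + ((l : ℕ) : ZMod p)).val * s : ℕ)) : ℂ)))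
        * Complex.exp (cst p *
          ((((ω.1 1 + ((l' : ℕ) : ZMod p)).val * s : ℕ)) : ℂ)))]
    exact exp_orth hp _ _
  rw [hsum]
  have hiff : (ω.1 1 + ((l : ℕ) : ZMod p)) = (ω.1 1 + ((l' : ℕ) : ZMod p)) ↔ l = l' := by
    constructor
    · intro h
      have h2 : ((l : ℕ) : ZMod p) = ((l' : ℕ) : ZMod p) := by
        exact add_left_cancel h
      have h3 := congrArg ZMod.val h2
      rw [ZMod.val_natCast_of_lt l.isLt, ZMod.val_natCast_of_lt l'.isLt] at h3
      exact Fin.ext h3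
    · intro h; rw [h]
  have hp0 : (p : ℂ) ≠ 0 := by exact_mod_cast (by omega : p ≠ 0)
  by_cases h : l = l'
  · rw [if_pos (hiff.mpr h), if_pos h, inv_mul_cancel₀ hp0]
  · rw [if_neg (fun hh => h (hiff.mp hh)), if_neg h, mul_zero]

lemma mask_eq_mul (hp : 2 ≤ p) {n : ℕ} (hn : 1 ≤ n) {r : ℕ}
    {a : Fin (r + 1) → ℕ → ℂ} {mks : Fin (r + 1) → Vil p → ℂ}
    (hWP : ∀ ν, IsWalshPolyOfOrder p n (a ν) (mks ν)) (ω : Vil p) :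
    MaskMatrix p r mks ω = Fm p ω * Pm p n r a ω := by
  ext l ν
  rw [Matrix.mul_apply]
  simp only [MaskMatrix, Fm, Pm, Matrix.of_apply]
  rw [mask_formula hp hn (hWP ν) (ω + deltaElt p (l : ℕ))]
  have hx1 : (ω + deltaElt p (l : ℕ)).1 1 = ω.1 1 + ((l : ℕ) : ZMod p) := by
    rw [vil_add_apply, deltaElt_apply, if_pos rfl]
  have hpoly : ∀ s : ℕ, polyphase p n (a ν) s (Ash p 1 (ω + deltaElt p (l : ℕ)))
      = polyphase p n (a ν) s (Ash p 1 ω) := by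
    intro s
    apply polyphase_local hp
    intro j hj
    rw [Finset.mem_Icc] at hj
    rw [Ash_apply, Ash_apply, vil_add_apply, deltaElt_apply, if_neg (by omega), add_zero]
  rw [Finset.mul_sum]
  rw [← Fin.sum_univ_eq_sum_range (fun s => (Real.sqrt p : ℂ)⁻¹ *
    ((starRingEnd ℂ) (Complex.exp (cst p *
      ((((ω + deltaElt p (l : ℕ)).1 1).val * s : ℕ) : ℂ)))
      * polyphase p n (a ν) s (Ash p 1 (ω + deltaElt p (l : ℕ))))) p]
  refine Finset.sum_congr rfl fun s _ => ?_
  rw [hpoly, hx1]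
  ring

end Aux6
section Aux7

variable {p : ℕ}

lemma UEP_iff_PP (hp : 2 ≤ p) {n : ℕ} (hn : 1 ≤ n) {r : ℕ}
    {a : Fin (r + 1) → ℕ → ℂ} {mks : Fin (r + 1) → Vil p → ℂ}
    (hWP : ∀ ν, IsWalshPolyOfOrder p n (a ν) (mks ν)) :
    UEP p r mks ↔ ∀ ω : Vil p, Pm p n r a ω * (Pm p n r a ω)ᴴ = 1 := by
  constructor
  · intro hU ω
    have hM := mask_eq_mul hp hn hWP ω
    have hFF := Fm_unitary hp ω
    have hFtF : (Fm p ω)ᴴ * Fm p ω = 1 := mul_eq_one_comm.mp hFF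
    have hP : Pm p n r a ω = (Fm p ω)ᴴ * MaskMatrix p r mks ω := by
      rw [hM, ← Matrix.mul_assoc, hFtF, Matrix.one_mul]
    rw [hP, Matrix.conjTranspose_mul, Matrix.conjTranspose_conjTranspose,
      Matrix.mul_assoc, ← Matrix.mul_assoc (MaskMatrix p r mks ω), hU ω,
      Matrix.one_mul, hFtF]
  · intro hPP ω
    have hM := mask_eq_mul hp hn hWP ω
    have hFF := Fm_unitary hp ω
    rw [hM, Matrix.conjTranspose_mul, Matrix.mul_assoc,
      ← Matrix.mul_assoc (Pm p n r a ω), hPP ω, Matrix.one_mul, hFF]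

lemma norm_sq_eq_re_mul_conj (z : ℂ) : ‖z‖ ^ 2 = (z * (starRingEnd ℂ) z).re := by
  rw [Complex.mul_conj]
  rw [Complex.sq_norm]
  simp

/-- A matrix with orthonormal columns preserves the `ℓ²` norm. -/
lemma sum_norm_mulVec (F : Matrix (Fin p) (Fin p) ℂ) (hF : Fᴴ * F = 1)
    (v : Fin p → ℂ) :
    ∑ l : Fin p, ‖F.mulVec v l‖ ^ 2 = ∑ s : Fin p, ‖v s‖ ^ 2 := by
  have hC : ∑ l : Fin p, (F.mulVec v l * (starRingEnd ℂ) (F.mulVec v l))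
      = ∑ s : Fin p, (v s * (starRingEnd ℂ) (v s)) := by
    have expand : ∀ l : Fin p, F.mulVec v l * (starRingEnd ℂ) (F.mulVec v l)
        = ∑ s : Fin p, ∑ s' : Fin p,
            (v s * (starRingEnd ℂ) (v s')) * ((starRingEnd ℂ) (F l s') * F l s) := by
      intro l
      rw [Matrix.mulVec, dotProduct, map_sum, Finset.sum_mul_sum]
      refine Finset.sum_congr rfl fun s _ => Finset.sum_congr rfl fun s' _ => ?_
      rw [_root_.map_mul]
      ring
    rw [Finset.sum_congr rfl (fun l _ => expand l)]
    rw [Finset.sum_comm]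
    have swap2 : ∀ s : Fin p, ∑ l : Fin p, ∑ s' : Fin p,
          (v s * (starRingEnd ℂ) (v s')) * ((starRingEnd ℂ) (F l s') * F l s)
        = ∑ s' : Fin p, (v s * (starRingEnd ℂ) (v s')) * (Fᴴ * F) s' s := by
      intro s
      rw [Finset.sum_comm]
      refine Finset.sum_congr rfl fun s' _ => ?_
      rw [Matrix.mul_apply, Finset.mul_sum]
      refine Finset.sum_congr rfl fun l _ => ?_
      rw [Matrix.conjTranspose_apply, RCLike.star_def]
    rw [Finset.sum_congr rfl (fun s _ => swap2 s)]
    refine Finset.sum_congr rfl fun s _ => ?_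
    rw [hF]
    rw [Finset.sum_eq_single s]
    · rw [Matrix.one_apply_eq, mul_one]
    · intro s' _ hne
      rw [Matrix.one_apply_ne hne, mul_zero]
    · intro h
      exact absurd (Finset.mem_univ s) h
  calc ∑ l : Fin p, ‖F.mulVec v l‖ ^ 2
      = (∑ l : Fin p, (F.mulVec v l * (starRingEnd ℂ) (F.mulVec v l))).re := by
        rw [Complex.re_sum]
        exact Finset.sum_congr rfl fun l _ => norm_sq_eq_re_mul_conj _
    _ = (∑ s : Fin p, (v s * (starRingEnd ℂ) (v s))).re := by rw [hC]
    _ = ∑ s : Fin p, ‖v s‖ ^ 2 := by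
        rw [Complex.re_sum]
        exact Finset.sum_congr rfl fun s _ => (norm_sq_eq_re_mul_conj _).symm

end Aux7
section Aux8

variable {p : ℕ}

lemma vil_sub_apply (x y : Vil p) (j : ℤ) : (x - y).1 j = x.1 j - y.1 j := rfl

lemma mem_Uset_iff (x : Vil p) : x ∈ Uset p ↔ ∀ j ≤ (0:ℤ), x.1 j = 0 := Iff.rfl

lemma mem_Unl_iff (n l : ℕ) (x : Vil p) :
    x ∈ Unl p n l ↔ ∀ j ≤ (n:ℤ), x.1 j = (hElt p l).1 (j - n) := by
  constructor
  · rintro ⟨u, hu, rfl⟩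
    intro j hj
    have h1 : (Ash p (-(n:ℤ)) (hElt p l) + Ash p (-(n:ℤ)) u).1 j
        = (hElt p l).1 (j + -(n:ℤ)) + u.1 (j + -(n:ℤ)) := rfl
    rw [h1, hu (j + -(n:ℤ)) (by omega), add_zero]
    have he : j + -(n:ℤ) = j - n := by ring
    rw [he]
  · intro h
    refine ⟨Ash p (n:ℤ) x - hElt p l, ?_, ?_⟩
    · intro j hj
      rw [vil_sub_apply, Ash_apply]
      have := h (j + n) (by omega)
      rw [this]
      have : j + (n:ℤ) - n = j := by ring
      rw [this, sub_self]
    · apply Subtype.ext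
      funext j
      show (hElt p l).1 (j + -(n:ℤ)) + ((Ash p (n:ℤ) x).1 (j + -(n:ℤ))
          - (hElt p l).1 (j + -(n:ℤ))) = x.1 j
      rw [Ash_apply]
      have : j + -(n:ℤ) + n = j := by ring
      rw [this]
      ring

/-- Existence of base-`p` representations matching a given coordinate pattern. -/
lemma digit_exists (hp : 2 ≤ p) (f : ℤ → ZMod p) :
    ∀ n : ℕ, ∃ l, l < p ^ n ∧ ∀ j : ℤ, 1 ≤ j → j ≤ (n:ℤ) →
      ((l / p ^ ((n:ℤ) - j).toNat : ℕ) : ZMod p) = f j := by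
  haveI : NeZero p := ⟨by omega⟩
  intro n
  induction n with
  | zero => exact ⟨0, by norm_num, fun j h1 h2 => absurd (h1.trans h2) (by norm_num)⟩
  | succ m ih =>
    obtain ⟨l', hl', hd⟩ := ih
    refine ⟨p * l' + (f (m + 1)).val, ?_, ?_⟩
    · have h1 : p * (l' + 1) ≤ p * p ^ m := Nat.mul_le_mul_left p hl'
      have h2 : p * p ^ m = p ^ (m + 1) := (pow_succ' p m).symm
      have h3 : p * (l' + 1) = p * l' + p := by ring
      have h4 : (f (m + 1)).val < p := ZMod.val_lt _
      omega
    · intro j h1 h2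
      rcases eq_or_lt_of_le h2 with he | hlt
      · have : (((m:ℕ)+1:ℤ) - j).toNat = 0 := by omega
        rw [show ((((m+1):ℕ):ℤ) - j).toNat = 0 by omega, pow_zero, Nat.div_one]
        have : ((p * l' + (f (m + 1)).val : ℕ) : ZMod p)
            = ((f (m + 1)).val : ZMod p) := by
          push_cast
          rw [ZMod.natCast_self]
          ring
        rw [this, ZMod.natCast_rightInverse _]
        congr 1
        omega
      · have hjm : j ≤ (m:ℤ) := by omega
        have ht : ((((m+1):ℕ):ℤ) - j).toNat = ((m:ℤ) - j).toNat + 1 := by omega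
        rw [ht, div_pow_succ hp (ZMod.val_lt _) l' _, hd j h1 hjm]

/-- Uniqueness of base-`p` representations. -/
lemma digit_unique (hp : 2 ≤ p) :
    ∀ n : ℕ, ∀ l l' : ℕ, l < p ^ n → l' < p ^ n →
      (∀ i < n, ((l / p ^ i : ℕ) : ZMod p) = ((l' / p ^ i : ℕ) : ZMod p)) → l = l' := by
  intro n
  induction n with
  | zero => intro l l' hl hl' _; simp at hl hl'; omega
  | succ m ih =>
    intro l l' hl hl' h
    have hmod : l % p = l' % p := by
      have := h 0 (by omega)
      rw [pow_zero, Nat.div_one, Nat.div_one] at this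
      have := (ZMod.natCast_eq_natCast_iff' l l' p).mp this
      exact this
    have hdiv : l / p = l' / p := by
      apply ih
      · exact Nat.div_lt_of_lt_mul (by rw [← pow_succ']; exact hl)
      · exact Nat.div_lt_of_lt_mul (by rw [← pow_succ']; exact hl')
      · intro i hi
        have hq : ∀ m : ℕ, m / p / p ^ i = m / p ^ (i + 1) := by
          intro m
          rw [Nat.div_div_eq_div_mul, ← pow_succ']
        rw [hq, hq]
        exact h (i + 1) (by omega)
    have e1 := Nat.div_add_mod l p
    have e2 := Nat.div_add_mod l' p
    have e3 : p * (l / p) = p * (l' / p) := by rw [hdiv]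
    omega

lemma Unl_disjoint (hp : 2 ≤ p) {n l l' : ℕ} (hl : l < p ^ n) (hl' : l' < p ^ n)
    {x : Vil p} (hx : x ∈ Unl p n l) (hx' : x ∈ Unl p n l') : l = l' := by
  rw [mem_Unl_iff] at hx hx'
  apply digit_unique hp n l l' hl hl'
  intro i hi
  have hj : ((n:ℤ) - i) ≤ (n:ℤ) := by omega
  have h1 := hx ((n:ℤ) - i) hj
  have h2 := hx' ((n:ℤ) - i) hj
  rw [h1] at h2
  rw [hElt_apply_le _ (by omega), hElt_apply_le _ (by omega)] at h2
  have : (-((n:ℤ) - i - n)).toNat = i := by omega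
  rw [this] at h2
  exact h2

lemma exists_Unl (hp : 2 ≤ p) {n : ℕ} {ω : Vil p} (hω : ω ∈ Uset p) :
    ∃ l, l < p ^ n ∧ ω ∈ Unl p n l := by
  obtain ⟨l, hl, hd⟩ := digit_exists hp (fun j => ω.1 j) n
  refine ⟨l, hl, ?_⟩
  rw [mem_Unl_iff]
  intro j hj
  rcases le_or_gt j 0 with h0 | h0
  · rw [hω j h0, hElt_apply_le _ (by omega)]
    have hge : n ≤ (-(j - (n:ℤ))).toNat := by omega
    have : l < p ^ (-(j - (n:ℤ))).toNat :=
      lt_of_lt_of_le hl (Nat.pow_le_pow_right (by omega) hge)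
    rw [Nat.div_eq_of_lt this, Nat.cast_zero]
  · rw [hElt_apply_le _ (by omega)]
    have := hd j (by omega) hj
    rw [show (-(j - (n:ℤ))).toNat = ((n:ℤ) - j).toNat by omega]
    exact this.symm

lemma rep_mem_Unl (hp : 2 ≤ p) (n l : ℕ) :
    Ash p (-(n:ℤ)) (hElt p l) ∈ Unl p n l := by
  rw [mem_Unl_iff]
  intro j hj
  rw [Ash_apply]
  have he : j + -(n:ℤ) = j - n := by ring
  rw [he]

/-- On the coset `U_{n,l}`, the shifted polyphase component takes the constant
value given by the representative `A^{1-n} h_[l]`. -/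
lemma polyphase_const_on_Unl (hp : 2 ≤ p) {n : ℕ} (hn : 1 ≤ n) (a : ℕ → ℂ) (s : ℕ)
    {l : ℕ} {ω : Vil p} (hω : ω ∈ Unl p n l) :
    polyphase p n a s (Ash p 1 ω) = polyphase p n a s (Ash p (1 - (n:ℤ)) (hElt p l)) := by
  rw [mem_Unl_iff] at hω
  apply polyphase_local hp
  intro j hj
  rw [Finset.mem_Icc] at hj
  rw [Ash_apply, Ash_apply]
  have hjn : j + 1 ≤ (n:ℤ) := by omega
  rw [hω (j + 1) hjn]
  congr 1
  ring

end Aux8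
section Aux9

variable {p : ℕ}

lemma Ash_one_shift (n : ℕ) (x : Vil p) :
    Ash p 1 (Ash p (-(n:ℤ)) x) = Ash p (1 - (n:ℤ)) x := by
  have h : (1:ℤ) + -(n:ℤ) = 1 - n := by ring
  rw [Ash_Ash, h]

/-- Truncation of `ω` to coordinates `1..n`. -/
def truncN (p n : ℕ) (ω : Vil p) : Vil p :=
  ⟨fun j => if 1 ≤ j ∧ j ≤ (n:ℤ) then ω.1 j else 0, ⟨1, fun j hj => if_neg (by omega)⟩⟩

lemma truncN_mem_Uset (n : ℕ) (ω : Vil p) : truncN p n ω ∈ Uset p :=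
  fun j hj => if_neg (by omega)

lemma truncN_apply_eq (n : ℕ) (ω : Vil p) {j : ℤ} (h1 : 1 ≤ j) (h2 : j ≤ (n:ℤ)) :
    (truncN p n ω).1 j = ω.1 j := if_pos ⟨h1, h2⟩

lemma indicator_sum_collapse (hp : 2 ≤ p) {n : ℕ} {ω : Vil p} {l₀ : ℕ}
    (hl₀ : l₀ < p ^ n) (hmem : ω ∈ Unl p n l₀) (c : ℕ → ℂ) :
    ∑ l ∈ Finset.range (p ^ n),
        c l * Set.indicator (Unl p n l) (fun _ => (1:ℂ)) ω = c l₀ := by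
  rw [Finset.sum_eq_single l₀]
  · rw [Set.indicator_of_mem hmem, mul_one]
  · intro l hl hne
    rw [Set.indicator_of_notMem, mul_zero]
    intro hmem'
    exact hne (Unl_disjoint hp (Finset.mem_range.mp hl) hl₀ hmem' hmem)
  · intro h
    exact absurd (Finset.mem_range.mpr hl₀) h

lemma Pm_trunc (hp : 2 ≤ p) {n : ℕ} (hn : 1 ≤ n) {r : ℕ}
    (a : Fin (r + 1) → ℕ → ℂ) (ω : Vil p) :
    Pm p n r a ω = Pm p n r a (truncN p n ω) := by
  ext s ν
  simp only [Pm, Matrix.of_apply]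
  apply polyphase_local hp
  intro j hj
  rw [Finset.mem_Icc] at hj
  rw [Ash_apply, Ash_apply, truncN_apply_eq n ω (by omega) (by omega)]

end Aux9

/-- **Corollary 1.**  Let `m_0` be a Walsh polynomial of order `p^n - 1` satisfying
condition (*), and let `b^{(0,s)}_{n,l} = μ_{0,s}(A^{1-n} h_[l])`.  Then
(i) `Σ_s |b^{(0,s)}_{n,l}|² ≤ 1` for every `l`, and
(ii) Walsh polynomials `m_1, …, m_r` of order `p^n - 1` satisfy `M(ω)M(ω)* = I_p` for
all `ω` iff their polyphase components are `μ_{ν,s}(Aω) = Σ_l b^{(ν,s)}_{n,l} 1_{U_{n,l}}(ω)`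
on `U`, with the numbers `b^{(ν,s)}_{n,l}` satisfying the orthonormality relations
`Σ_ν b^{(ν,s)}_{n,l} conj b^{(ν,s')}_{n,l} = δ_{s,s'}`. -/
theorem statement7 (p : ℕ) (hp : 2 ≤ p) (n : ℕ) (hn : 1 ≤ n) (r : ℕ) (hr : p - 1 ≤ r)
    (a0 : ℕ → ℂ) (m0 : Vil p → ℂ) (hm0 : IsWalshPolyOfOrder p n a0 m0)
    (hstar : StarCond p m0)
    (b0 : ℕ → ℕ → ℂ)
    (hb0 : ∀ s l, b0 s l = polyphase p n a0 s (Ash p (1 - (n : ℤ)) (hElt p l))) :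
    (∀ l < p ^ n, ∑ s ∈ Finset.range p, ‖b0 s l‖ ^ 2 ≤ 1) ∧
    (∀ (a : Fin (r + 1) → ℕ → ℂ) (mks : Fin (r + 1) → Vil p → ℂ),
      a 0 = a0 → mks 0 = m0 →
      (∀ ν, IsWalshPolyOfOrder p n (a ν) (mks ν)) →
      (UEP p r mks ↔
        ∃ b : Fin (r + 1) → ℕ → ℕ → ℂ,
          (∀ s l, b 0 s l = b0 s l) ∧
          (∀ (ν : Fin (r + 1)), ∀ s < p, ∀ ω ∈ Uset p,
            polyphase p n (a ν) s (Ash p 1 ω)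
              = ∑ l ∈ Finset.range (p ^ n),
                  b ν s l * Set.indicator (Unl p n l) (fun _ => (1 : ℂ)) ω) ∧
          (∀ s < p, ∀ s' < p, ∀ l < p ^ n,
            ∑ ν : Fin (r + 1), b ν s l * (starRingEnd ℂ) (b ν s' l)
              = if s = s' then 1 else 0))) := by
  constructor
  · -- Part (i)
    intro l hl
    set ω : Vil p := Ash p (-(n:ℤ)) (hElt p l) with hω
    set v : Fin p → ℂ := fun s => polyphase p n a0 (s : ℕ) (Ash p 1 ω) with hv
    have hM := mask_eq_mul hp hn (r := 0) (a := fun _ => a0) (mks := fun _ => m0)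
      (fun _ => hm0) ω
    have hcol : ∀ l' : Fin p, m0 (ω + deltaElt p (l' : ℕ)) = (Fm p ω).mulVec v l' := by
      intro l'
      have := congrFun (congrFun hM l') 0
      simp only [MaskMatrix, Matrix.of_apply] at this
      rw [this, Matrix.mul_apply, Matrix.mulVec, dotProduct]
      rfl
    have hFtF : (Fm p ω)ᴴ * Fm p ω = 1 := mul_eq_one_comm.mp (Fm_unitary hp ω)
    have hkey : ∑ s ∈ Finset.range p, ‖b0 s l‖ ^ 2
        = ∑ l' ∈ Finset.range p, ‖m0 (ω + deltaElt p l')‖ ^ 2 := by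
      rw [← Fin.sum_univ_eq_sum_range (fun s => ‖b0 s l‖ ^ 2) p,
        ← Fin.sum_univ_eq_sum_range (fun l' => ‖m0 (ω + deltaElt p l')‖ ^ 2) p]
      have h1 : ∀ s : Fin p, ‖b0 (s : ℕ) l‖ ^ 2 = ‖v s‖ ^ 2 := by
        intro s
        rw [hb0, hv]
        simp only
        rw [hω, Ash_one_shift]
      rw [Finset.sum_congr rfl (fun s _ => h1 s),
        ← sum_norm_mulVec (Fm p ω) hFtF v]
      exact Finset.sum_congr rfl fun l' _ => by rw [hcol l']
    rw [hkey]
    exact hstar ω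
  · -- Part (ii)
    intro a mks ha0 hmks0 hWP
    rw [UEP_iff_PP hp hn hWP]
    constructor
    · -- forward
      intro hPP
      refine ⟨fun ν s l => polyphase p n (a ν) s (Ash p (1 - (n:ℤ)) (hElt p l)),
        ?_, ?_, ?_⟩
      · intro s l
        simp only
        rw [hb0, ha0]
      · intro ν s hs ω hω
        obtain ⟨l₀, hl₀, hmem⟩ := exists_Unl hp (n := n) hω
        rw [indicator_sum_collapse hp hl₀ hmem]
        exact polyphase_const_on_Unl hp hn (a ν) s hmem
      · intro s hs s' hs' l hl
        have h := congrFun (congrFun (hPP (Ash p (-(n:ℤ)) (hElt p l))) ⟨s, hs⟩) ⟨s', hs'⟩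
        rw [Matrix.mul_apply] at h
        simp only [Pm, Matrix.conjTranspose_apply, Matrix.of_apply, RCLike.star_def,
          Ash_one_shift, Matrix.one_apply] at h
        rw [h]
        simp [Fin.mk.injEq]
    · -- backward
      rintro ⟨b, hbb0, hform, horth⟩ ω
      rw [Pm_trunc hp hn a ω]
      set ω' : Vil p := truncN p n ω with hω'
      have hωU : ω' ∈ Uset p := truncN_mem_Uset n ω
      obtain ⟨l₀, hl₀, hmem⟩ := exists_Unl hp (n := n) hωU
      have hPval : ∀ (ν : Fin (r+1)) (s : Fin p), Pm p n r a ω' s ν = b ν (s : ℕ) l₀ := by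
        intro ν s
        simp only [Pm, Matrix.of_apply]
        rw [hform ν (s : ℕ) s.isLt ω' hωU, indicator_sum_collapse hp hl₀ hmem]
      ext s s'
      rw [Matrix.mul_apply]
      simp only [Matrix.conjTranspose_apply, RCLike.star_def, hPval]
      have := horth (s : ℕ) s.isLt (s' : ℕ) s'.isLt l₀ hl₀
      rw [this, Matrix.one_apply]
      simp [Fin.val_inj]

end Vilenkin
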